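/- For any positive integers s, t, p, there exists Q = Q(s,t,p) such that every graph G containing a matching of size Q contains either an induced matching of size s, or an induced complete bipartite subgraph K_{t,t}, or a clique of size p. -/

import Mathlib

/-- `e` lists `m` pairwise vertex-disjoint edges of `G` (a matching of size `m`). -/
def MatchingSeq {V : Type} (G : SimpleGraph V) (m : ℕ) (e : Fin m → V × V) : Prop :=
  (∀ i, G.Adj (e i).1 (e i).2) ∧
  ∀ i j, i ≠ j →
    (e i).1 ≠ (e j).1 ∧ (e i).1 ≠ (e j).2 ∧ (e i).2 ≠ (e j).1 ∧ (e i).2 ≠ (e j).2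

/-- `e` is an induced matching of size `m`: a matching whose `2m` endpoints induce
exactly those `m` edges. -/
def InducedMatchingSeq {V : Type} (G : SimpleGraph V) (m : ℕ) (e : Fin m → V × V) : Prop :=
  MatchingSeq G m e ∧
  ∀ i j, i ≠ j →
    ¬ G.Adj (e i).1 (e j).1 ∧ ¬ G.Adj (e i).1 (e j).2 ∧
    ¬ G.Adj (e i).2 (e j).1 ∧ ¬ G.Adj (e i).2 (e j).2

/-- For any positive integers `s`, `t`, `p` there is `Q` such that every graph with a matching
of size `Q` contains an induced matching of size `s`, or an induced `K_{t,t}`, or a clique of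
size `p`. -/

lemma premono {α : Type} [Fintype α] [DecidableEq α] [Nonempty α] (c : ℕ → ℕ → α) :
    ∀ (M : ℕ) (S : Finset ℕ), (Fintype.card α + 1) ^ M ≤ S.card →
    ∃ (x : Fin M → ℕ) (d : Fin M → α), StrictMono x ∧ (∀ i, x i ∈ S) ∧
      ∀ i j : Fin M, i < j → c (x i) (x j) = d i := by
  intro M
  induction M with
  | zero =>
    intro S _
    exact ⟨fun i => i.elim0, fun i => i.elim0, fun i => i.elim0, fun i => i.elim0,
      fun i => i.elim0⟩
  | succ M ih =>
    intro S hS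
    set k := Fintype.card α with hk
    have hSne : S.Nonempty := by
      apply Finset.card_pos.mp
      have : 0 < (k + 1) ^ (M + 1) := Nat.pow_pos (Nat.succ_pos k)
      omega
    set m := S.min' hSne with hm
    set S' := S.erase m with hS'
    have hS'card : k * (k + 1) ^ M ≤ S'.card := by
      have h1 : S'.card = S.card - 1 := Finset.card_erase_of_mem (S.min'_mem hSne)
      have h2 : (k + 1) ^ (M + 1) = k * (k + 1) ^ M + (k + 1) ^ M := by ring
      have h3 : 1 ≤ (k + 1) ^ M := Nat.one_le_pow _ _ (Nat.succ_pos k)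
      omega
    obtain ⟨a, -, ha⟩ := Finset.exists_le_card_fiber_of_mul_le_card_of_maps_to
      (f := c m) (t := (Finset.univ : Finset α)) (fun x _ => Finset.mem_univ _)
      Finset.univ_nonempty (by simpa using hS'card)
    obtain ⟨x', d', hx'mono, hx'mem, hx'c⟩ := ih _ ha
    have hx'T : ∀ i, x' i ∈ S' ∧ c m (x' i) = a := by
      intro i
      have := hx'mem i
      simp only [Finset.mem_filter] at this
      exact this
    have hmlt : ∀ i, m < x' i := by
      intro i
      have h1 := (hx'T i).1
      rw [hS', Finset.mem_erase] at h1
      exact lt_of_le_of_ne (S.min'_le _ h1.2) (Ne.symm h1.1)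
    refine ⟨Fin.cons m x', Fin.cons a d', ?_, ?_, ?_⟩
    · intro i j hij
      induction j using Fin.cases with
      | zero => exact absurd hij (by simp)
      | succ j =>
        induction i using Fin.cases with
        | zero => simpa using hmlt j
        | succ i =>
          simp only [Fin.cons_succ]
          exact hx'mono (by simpa [Fin.succ_lt_succ_iff] using hij)
    · intro i
      induction i using Fin.cases with
      | zero => simpa using S.min'_mem hSne
      | succ i =>
        simp only [Fin.cons_succ]
        exact Finset.mem_of_mem_erase (hx'T i).1
    · intro i j hij
      induction j using Fin.cases with
      | zero => exact absurd hij (by simp)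
      | succ j =>
        induction i using Fin.cases with
        | zero => simpa using (hx'T j).2
        | succ i =>
          simp only [Fin.cons_succ]
          exact hx'c i j (by simpa [Fin.succ_lt_succ_iff] using hij)

lemma ramsey_pairs {α : Type} [Fintype α] [DecidableEq α] [Nonempty α] (c : ℕ → ℕ → α)
    (N : ℕ) (S : Finset ℕ)
    (hS : (Fintype.card α + 1) ^ (Fintype.card α * (N - 1) + 1) ≤ S.card) :
    ∃ (z : Fin N → ℕ) (a : α), StrictMono z ∧ (∀ i, z i ∈ S) ∧
      ∀ i j : Fin N, i < j → c (z i) (z j) = a := by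
  set M := Fintype.card α * (N - 1) + 1 with hM
  obtain ⟨x, d, hxmono, hxmem, hxc⟩ := premono c M S hS
  obtain ⟨a, -, ha⟩ := Finset.exists_lt_card_fiber_of_mul_lt_card_of_maps_to
    (f := d) (s := (Finset.univ : Finset (Fin M))) (t := (Finset.univ : Finset α))
    (fun x _ => Finset.mem_univ _) (n := N - 1) (by simp [hM])
  set F := Finset.univ.filter (fun i => d i = a) with hF
  have hNF : N ≤ F.card := by
    rcases Nat.eq_zero_or_pos N with h | h
    · simp [h]
    · omega
  set g := F.orderEmbOfCardLe hNF with hg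
  refine ⟨fun i => x (g i), a, ?_, fun i => hxmem _, ?_⟩
  · exact hxmono.comp g.strictMono
  · intro i j hij
    have hgmem := F.orderEmbOfCardLe_mem hNF i
    show c (x (g i)) (x (g j)) = a
    rw [hxc _ _ (g.strictMono hij)]
    exact (Finset.mem_filter.mp hgmem).2

lemma clique_aux {V : Type} (G : SimpleGraph V) {N p : ℕ} (hpN : p ≤ N) (A : Fin N → V)
    (hinj : ∀ i j : Fin N, i ≠ j → A i ≠ A j)
    (hadj : ∀ i j : Fin N, i < j → G.Adj (A i) (A j)) :
    ∃ w : Finset V, G.IsNClique p w := by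
  classical
  have cinj : Function.Injective (Fin.castLE hpN) := by
    intro i j h
    have h2 := congrArg Fin.val h
    exact Fin.ext h2
  have Ainj : Function.Injective (fun i : Fin p => A (Fin.castLE hpN i)) := by
    intro i j hAij
    by_contra hne
    exact hinj _ _ (fun h => hne (cinj h)) hAij
  refine ⟨Finset.univ.image (fun i : Fin p => A (Fin.castLE hpN i)), ?_, ?_⟩
  · intro x hx y hy hxy
    simp only [Finset.coe_image, Finset.coe_univ, Set.image_univ, Set.mem_range] at hx hy
    obtain ⟨i, rfl⟩ := hx
    obtain ⟨j, rfl⟩ := hy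
    have hij : Fin.castLE hpN i ≠ Fin.castLE hpN j := fun h => hxy (by rw [h])
    rcases lt_or_gt_of_ne hij with h | h
    · exact hadj _ _ h
    · exact (hadj _ _ h).symm
  · rw [Finset.card_image_of_injective _ Ainj, Finset.card_univ, Fintype.card_fin]

lemma ktt_aux {V : Type} (G : SimpleGraph V) {N t : ℕ} (h2t : 2 * t ≤ N) (A B : Fin N → V)
    (hdisj : ∀ i j : Fin N, i ≠ j → A i ≠ A j ∧ A i ≠ B j ∧ B i ≠ A j ∧ B i ≠ B j)
    (hABself : ∀ i, A i ≠ B i)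
    (hAA : ∀ i j : Fin N, i < j → ¬ G.Adj (A i) (A j))
    (hBB : ∀ i j : Fin N, i < j → ¬ G.Adj (B i) (B j))
    (hAB : ∀ i j : Fin N, i < j → G.Adj (A i) (B j)) :
    Nonempty (completeBipartiteGraph (Fin t) (Fin t) ↪g G) := by
  have hkt : ∀ k : Fin t, (k : ℕ) < N := fun k => by have := k.isLt; omega
  have hkt' : ∀ k : Fin t, t + (k : ℕ) < N := fun k => by have := k.isLt; omega
  set fL : Fin t → Fin N := fun k => ⟨k.val, hkt k⟩ with hfL
  set fR : Fin t → Fin N := fun k => ⟨t + k.val, hkt' k⟩ with hfR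
  have hLR : ∀ k l : Fin t, fL k ≠ fR l := by
    intro k l h
    have h2 := congrArg Fin.val h
    simp only [hfL, hfR] at h2
    have := k.isLt
    omega
  have hLRlt : ∀ k l : Fin t, fL k < fR l := by
    intro k l
    show (k : ℕ) < t + (l : ℕ)
    have := k.isLt
    omega
  have hRinj : ∀ k l : Fin t, fR k = fR l → k = l := by
    intro k l h
    have h2 := congrArg Fin.val h
    simp only [hfR] at h2
    exact Fin.ext (by omega)
  have hLinj : ∀ k l : Fin t, fL k = fL l → k = l := by
    intro k l h
    have h2 := congrArg Fin.val h
    simp only [hfL] at h2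
    exact Fin.ext h2
  refine ⟨⟨⟨Sum.elim (fun k => A (fL k)) (fun k => B (fR k)), ?_⟩, ?_⟩⟩
  · rintro (k | k) (l | l) h <;> simp only [Sum.elim_inl, Sum.elim_inr] at h
    · by_cases hkl : k = l
      · rw [hkl]
      · exact absurd h (hdisj _ _ (fun hh => hkl (hLinj _ _ hh))).1
    · exact absurd h (hdisj _ _ (hLR k l)).2.1
    · exact absurd h (hdisj _ _ (Ne.symm (hLR l k))).2.2.1
    · by_cases hkl : k = l
      · rw [hkl]
      · exact absurd h (hdisj _ _ (fun hh => hkl (hRinj _ _ hh))).2.2.2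
  · rintro (k | k) (l | l) <;>
      simp only [Function.Embedding.coeFn_mk, Sum.elim_inl, Sum.elim_inr,
        completeBipartiteGraph_adj, Sum.isLeft_inl, Sum.isRight_inl, Sum.isLeft_inr,
        Sum.isRight_inr, Bool.false_eq_true, Bool.true_eq_false, true_and, and_true,
        false_and, and_false, or_false, false_or, or_self, iff_true, iff_false]
    · rcases lt_trichotomy k l with h | h | h
      · exact hAA (fL k) (fL l) h
      · rw [h]; exact G.irrefl
      · intro hadj
        exact hAA (fL l) (fL k) h hadj.symm
    · exact hAB _ _ (hLRlt k l)
    · exact (hAB _ _ (hLRlt l k)).symm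
    · rcases lt_trichotomy k l with h | h | h
      · refine hBB (fR k) (fR l) ?_
        show t + (k : ℕ) < t + (l : ℕ)
        exact Nat.add_lt_add_left h t
      · rw [h]; exact G.irrefl
      · intro hadj
        refine hBB (fR l) (fR k) ?_ hadj.symm
        show t + (l : ℕ) < t + (k : ℕ)
        exact Nat.add_lt_add_left h t

theorem matching_ramsey (s t p : ℕ) (hs : 0 < s) (ht : 0 < t) (hp : 0 < p) :
    ∃ Q : ℕ, ∀ (V : Type) (G : SimpleGraph V),
      (∃ e : Fin Q → V × V, MatchingSeq G Q e) →
      ((∃ e : Fin s → V × V, InducedMatchingSeq G s e) ∨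
       Nonempty (completeBipartiteGraph (Fin t) (Fin t) ↪g G) ∨
       (∃ w : Finset V, G.IsNClique p w)) := by
  classical
  set N := max (max s p) (2 * t) with hN
  have hsN : s ≤ N := by omega
  have hpN : p ≤ N := by omega
  have h2tN : 2 * t ≤ N := by omega
  set K := Fintype.card (Bool × Bool × Bool × Bool) with hK
  set Q := (K + 1) ^ (K * (N - 1) + 1) with hQ
  refine ⟨Q, ?_⟩
  rintro V G ⟨e, he⟩
  set c : ℕ → ℕ → Bool × Bool × Bool × Bool := fun i j =>
    if h : i < Q ∧ j < Q then
      (decide (G.Adj (e ⟨i, h.1⟩).1 (e ⟨j, h.2⟩).1),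
       decide (G.Adj (e ⟨i, h.1⟩).1 (e ⟨j, h.2⟩).2),
       decide (G.Adj (e ⟨i, h.1⟩).2 (e ⟨j, h.2⟩).1),
       decide (G.Adj (e ⟨i, h.1⟩).2 (e ⟨j, h.2⟩).2))
    else (true, true, true, true) with hcdef
  obtain ⟨z, ⟨baa, bab, bba, bbb⟩, hzmono, hzmem, hzc⟩ :=
    ramsey_pairs c N (Finset.range Q) (by rw [Finset.card_range])
  have hzQ : ∀ i, z i < Q := fun i => Finset.mem_range.mp (hzmem i)
  set w : Fin N → Fin Q := fun i => ⟨z i, hzQ i⟩ with hw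
  set A : Fin N → V := fun i => (e (w i)).1 with hA
  set B : Fin N → V := fun i => (e (w i)).2 with hB
  have hwne : ∀ i j : Fin N, i ≠ j → w i ≠ w j := by
    intro i j hij h
    exact hij (hzmono.injective (congrArg Fin.val h))
  have hdisj : ∀ i j : Fin N, i ≠ j →
      A i ≠ A j ∧ A i ≠ B j ∧ B i ≠ A j ∧ B i ≠ B j :=
    fun i j hij => he.2 (w i) (w j) (hwne i j hij)
  have hABself : ∀ i : Fin N, A i ≠ B i := fun i => (he.1 (w i)).ne
  have hAdj : ∀ i : Fin N, G.Adj (A i) (B i) := fun i => he.1 (w i)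
  have key : ∀ i j : Fin N, i < j →
      (G.Adj (A i) (A j) ↔ baa = true) ∧ (G.Adj (A i) (B j) ↔ bab = true) ∧
      (G.Adj (B i) (A j) ↔ bba = true) ∧ (G.Adj (B i) (B j) ↔ bbb = true) := by
    intro i j hij
    have h := hzc i j hij
    rw [hcdef] at h
    simp only at h
    rw [dif_pos ⟨hzQ i, hzQ j⟩] at h
    simp only [Prod.mk.injEq] at h
    refine ⟨?_, ?_, ?_, ?_⟩
    · rw [← h.1, decide_eq_true_eq]
    · rw [← h.2.1, decide_eq_true_eq]
    · rw [← h.2.2.1, decide_eq_true_eq]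
    · rw [← h.2.2.2, decide_eq_true_eq]
  cases baa with
  | true =>
    refine Or.inr (Or.inr (clique_aux G hpN A (fun i j hij => (hdisj i j hij).1) ?_))
    exact fun i j hij => (key i j hij).1.mpr rfl
  | false =>
  cases bbb with
  | true =>
    refine Or.inr (Or.inr (clique_aux G hpN B (fun i j hij => (hdisj i j hij).2.2.2) ?_))
    exact fun i j hij => (key i j hij).2.2.2.mpr rfl
  | false =>
  cases bab with
  | true =>
    refine Or.inr (Or.inl (ktt_aux G h2tN A B hdisj hABself ?_ ?_ ?_))
    · intro i j hij hadj
      exact absurd ((key i j hij).1.mp hadj) (by simp)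
    · intro i j hij hadj
      exact absurd ((key i j hij).2.2.2.mp hadj) (by simp)
    · exact fun i j hij => (key i j hij).2.1.mpr rfl
  | false =>
  cases bba with
  | true =>
    refine Or.inr (Or.inl (ktt_aux G h2tN B A
      (fun i j hij => ⟨(hdisj i j hij).2.2.2, (hdisj i j hij).2.2.1,
        (hdisj i j hij).2.1, (hdisj i j hij).1⟩)
      (fun i => (hABself i).symm) ?_ ?_ ?_))
    · intro i j hij hadj
      exact absurd ((key i j hij).2.2.2.mp hadj) (by simp)
    · intro i j hij hadj
      exact absurd ((key i j hij).1.mp hadj) (by simp)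
    · exact fun i j hij => (key i j hij).2.2.1.mpr rfl
  | false =>
    refine Or.inl ⟨fun i => (A (Fin.castLE hsN i), B (Fin.castLE hsN i)), ?_, ?_⟩
    · refine ⟨fun i => hAdj _, fun i j hij => hdisj _ _ ?_⟩
      intro h
      have h2 := congrArg Fin.val h
      exact hij (Fin.ext h2)
    · intro i j hij
      have hij' : Fin.castLE hsN i ≠ Fin.castLE hsN j := by
        intro h
        have h2 := congrArg Fin.val h
        exact hij (Fin.ext h2)
      rcases lt_or_gt_of_ne hij' with h | h
      · exact ⟨fun ha => absurd ((key _ _ h).1.mp ha) (by simp),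
          fun ha => absurd ((key _ _ h).2.1.mp ha) (by simp),
          fun ha => absurd ((key _ _ h).2.2.1.mp ha) (by simp),
          fun ha => absurd ((key _ _ h).2.2.2.mp ha) (by simp)⟩
      · exact ⟨fun ha => absurd ((key _ _ h).1.mp ha.symm) (by simp),
          fun ha => absurd ((key _ _ h).2.2.1.mp ha.symm) (by simp),
          fun ha => absurd ((key _ _ h).2.1.mp ha.symm) (by simp),
          fun ha => absurd ((key _ _ h).2.2.2.mp ha.symm) (by simp)⟩
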